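/- In the hybrid graph Λ over ℕ²∗ℕ, for finite paths μ = μ₁⋯μ_m and ν = ν₁⋯ν_n with m ≤ n: MCE(μ,ν) = {ν} if n > m, μ_i = ν_i for i < m, and ν_m = μ_m ν_m′ for some ν_m′; MCE(μ,ν) = (μ₁⋯μ_{m−1})·MCE(μ_m,ν_m) if n = m and μ_i = ν_i for i < m; and MCE(μ,ν) = ∅ otherwise. In particular, Λ is finitely aligned. -/

import Mathlib

/-- The free product monoid `ℕ² ∗ ℕ` (written multiplicatively), in which degrees of
hybrid-graph paths live. -/
abbrev HybridDeg : Type :=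
  Monoid.Coprod (Multiplicative (ℕ × ℕ)) (Multiplicative ℕ)

/-- `s` is the least common upper bound of `p` and `q` in `ℕ² ∗ ℕ` for the
left-divisibility order (`p ≤ t ↔ p ∣ t`, i.e. `∃ r, t = p * r`). -/
def HLub (p q s : HybridDeg) : Prop :=
  p ∣ s ∧ q ∣ s ∧ ∀ t : HybridDeg, p ∣ t → q ∣ t → s ∣ t

/-- The data of Spielberg's hybrid graph: a directed graph `D` and the 2-graphs
`⊔_{i=0,1} E_i × F_i` attached to it along common vertices `V`.  We record the
nontrivial path segments (blocks): `DMor` are the paths of positive length in `D*` with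
their length `Ddeg`, and `EMor` are the nonidentity paths in `⊔_i E_i* × F_i*` with
their `ℕ²`-degree `Edeg`; each system has composition, the unique factorisation property
into nontrivial pieces, and is finitely aligned. -/
structure HybridBlocks where
  V : Type
  DMor : Type
  EMor : Type
  Dsrc : DMor → V
  Dtgt : DMor → V
  Esrc : EMor → V
  Etgt : EMor → V
  Dcomp : DMor → DMor → DMor
  Ecomp : EMor → EMor → EMor
  Ddeg : DMor → ℕ
  Edeg : EMor → ℕ × ℕ
  Ddeg_pos : ∀ a, 0 < Ddeg a
  Edeg_ne : ∀ a, Edeg a ≠ 0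
  Dsrc_comp : ∀ a b, Dsrc a = Dtgt b → Dsrc (Dcomp a b) = Dsrc b
  Dtgt_comp : ∀ a b, Dsrc a = Dtgt b → Dtgt (Dcomp a b) = Dtgt a
  Esrc_comp : ∀ a b, Esrc a = Etgt b → Esrc (Ecomp a b) = Esrc b
  Etgt_comp : ∀ a b, Esrc a = Etgt b → Etgt (Ecomp a b) = Etgt a
  Dcomp_assoc : ∀ a b c, Dsrc a = Dtgt b → Dsrc b = Dtgt c →
    Dcomp (Dcomp a b) c = Dcomp a (Dcomp b c)
  Ecomp_assoc : ∀ a b c, Esrc a = Etgt b → Esrc b = Etgt c →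
    Ecomp (Ecomp a b) c = Ecomp a (Ecomp b c)
  Ddeg_comp : ∀ a b, Dsrc a = Dtgt b → Ddeg (Dcomp a b) = Ddeg a + Ddeg b
  Edeg_comp : ∀ a b, Esrc a = Etgt b → Edeg (Ecomp a b) = Edeg a + Edeg b
  Dfactor : ∀ (c : DMor) (p q : ℕ), 0 < p → 0 < q → Ddeg c = p + q →
    ∃! ab : DMor × DMor, Dsrc ab.1 = Dtgt ab.2 ∧ c = Dcomp ab.1 ab.2 ∧
      Ddeg ab.1 = p ∧ Ddeg ab.2 = q
  Efactor : ∀ (c : EMor) (p q : ℕ × ℕ), p ≠ 0 → q ≠ 0 → Edeg c = p + q →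
    ∃! ab : EMor × EMor, Esrc ab.1 = Etgt ab.2 ∧ c = Ecomp ab.1 ab.2 ∧
      Edeg ab.1 = p ∧ Edeg ab.2 = q
  DFA : ∀ a b : DMor,
    {c : DMor | (a = c ∨ ∃ t, Dsrc a = Dtgt t ∧ c = Dcomp a t) ∧
                (b = c ∨ ∃ t, Dsrc b = Dtgt t ∧ c = Dcomp b t) ∧
                Ddeg c = max (Ddeg a) (Ddeg b)}.Finite
  EFA : ∀ a b : EMor,
    {c : EMor | (a = c ∨ ∃ t, Esrc a = Etgt t ∧ c = Ecomp a t) ∧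
                (b = c ∨ ∃ t, Esrc b = Etgt t ∧ c = Ecomp b t) ∧
                Edeg c = Edeg a ⊔ Edeg b}.Finite

namespace HybridBlocks

variable (H : HybridBlocks)

/-- A block of a hybrid path: a nontrivial segment from `⊔_i E_i* × F_i*` (left) or from
`D*` (right). -/
abbrev Block : Type := H.EMor ⊕ H.DMor

/-- The source (domain) vertex of a block. -/
def bsrc : H.Block → H.V
  | .inl e => H.Esrc e
  | .inr d => H.Dsrc d

/-- The range (codomain) vertex of a block. -/
def btgt : H.Block → H.V
  | .inl e => H.Etgt e
  | .inr d => H.Dtgt d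

/-- The degree of a block in `ℕ² ∗ ℕ`. -/
def bdeg : H.Block → HybridDeg
  | .inl e => Monoid.Coprod.inl (Multiplicative.ofAdd (H.Edeg e))
  | .inr d => Monoid.Coprod.inr (Multiplicative.ofAdd (H.Ddeg d))

/-- Two blocks are of different type when one comes from `D*` and the other from
`⊔_i E_i* × F_i*`. -/
def DiffType : H.Block → H.Block → Prop
  | .inl _, .inr _ => True
  | .inr _, .inl _ => True
  | _, _ => False

/-- A finite path of the hybrid graph (with at least one nontrivial block): a nonempty
string `μ₁ ⋯ μ_k` of blocks with `s(μ_j) = r(μ_{j+1})` and alternating types.  (The list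
is ordered with ranges to the left, as for composition `λ = μν` with `r(λ) = r(μ)`.) -/
def IsPath (l : List H.Block) : Prop :=
  l ≠ [] ∧ l.Chain' fun a b => H.bsrc a = H.btgt b ∧ H.DiffType a b

/-- The degree of a path: the word `l(μ₁) ⋯ l(μ_k) ∈ ℕ² ∗ ℕ`. -/
def pdeg (l : List H.Block) : HybridDeg := (l.map H.bdeg).prod

/-- The extension (prefix) order on blocks: `b ⪯ b'` iff `b' = b` or `b' = b·t` for a
block `t` of the same type. -/
def BLe : H.Block → H.Block → Prop
  | .inl e, .inl e' => e = e' ∨ ∃ t, H.Esrc e = H.Etgt t ∧ e' = H.Ecomp e t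
  | .inr d, .inr d' => d = d' ∨ ∃ t, H.Dsrc d = H.Dtgt t ∧ d' = H.Dcomp d t
  | _, _ => False

/-- The prefix order on hybrid paths: `μ ⪯ λ` iff `λ = μν` for some finite path `ν`,
i.e. `λ` agrees with `μ` except that the final block of `μ` is extended (possibly
trivially) and further alternating blocks may follow. -/
def PLe (mu lam : List H.Block) : Prop :=
  ∃ (pre : List H.Block) (b b' : H.Block) (rest : List H.Block),
    mu = pre ++ [b] ∧ lam = pre ++ b' :: rest ∧ H.BLe b b'

/-- Minimal common extensions of two blocks of `⊔_i E_i* × F_i*`. -/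
def EMCE (a b : H.EMor) : Set H.EMor :=
  {c | H.BLe (Sum.inl a) (Sum.inl c) ∧ H.BLe (Sum.inl b) (Sum.inl c) ∧
    H.Edeg c = H.Edeg a ⊔ H.Edeg b}

/-- Minimal common extensions of two blocks of `D*`. -/
def DMCE (a b : H.DMor) : Set H.DMor :=
  {c | H.BLe (Sum.inr a) (Sum.inr c) ∧ H.BLe (Sum.inr b) (Sum.inr c) ∧
    H.Ddeg c = max (H.Ddeg a) (H.Ddeg b)}

/-- Minimal common extensions of two blocks; empty for blocks of different type. -/
def BMCE : H.Block → H.Block → Set H.Block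
  | .inl a, .inl b => Sum.inl '' H.EMCE a b
  | .inr a, .inr b => Sum.inr '' H.DMCE a b
  | _, _ => ∅

/-- The set of minimal common extensions of the hybrid paths `μ` and `ν`: common
extensions `λ` with `d(λ) = d(μ) ∨ d(ν)` in `ℕ² ∗ ℕ`. -/
def HMCE (mu nu : List H.Block) : Set (List H.Block) :=
  {lam | H.IsPath lam ∧ H.PLe mu lam ∧ H.PLe nu lam ∧
    HLub (H.pdeg mu) (H.pdeg nu) (H.pdeg lam)}

end HybridBlocks



namespace Stmt18Aux

abbrev Letter : Type := Sum (ℕ × ℕ) ℕ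

def Good : Letter → Prop
  | .inl m => m ≠ 0
  | .inr n => n ≠ 0

def Alt : Letter → Letter → Prop := fun a b => a.isLeft ≠ b.isLeft

def Red (l : List Letter) : Prop := (∀ a ∈ l, Good a) ∧ l.Chain' Alt

/-- prepend an `ℕ²` letter, merging. -/
def consL (m : ℕ × ℕ) (l : List Letter) : List Letter :=
  if m = 0 then l else
    match l with
    | .inl m' :: t => .inl (m + m') :: t
    | _ => .inl m :: l

def consR (n : ℕ) (l : List Letter) : List Letter :=
  if n = 0 then l else
    match l with
    | .inr n' :: t => .inr (n + n') :: t
    | _ => .inr n :: l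

lemma consL_add (m m' : ℕ × ℕ) (l : List Letter) :
    consL (m + m') l = consL m (consL m' l) := by
  rcases eq_or_ne m 0 with rfl | hm
  · simp [consL]
  rcases eq_or_ne m' 0 with rfl | hm'
  · simp [consL]
  have hmm' : m + m' ≠ 0 := by
    rcases m with ⟨a,b⟩; rcases m' with ⟨c,d⟩
    simp only [Prod.mk_add_mk, Prod.ext_iff, Prod.fst_zero, Prod.snd_zero, ne_eq, not_and_or] at *
    omega
  cases l with
  | nil => simp [consL, hm, hm', hmm']
  | cons h t =>
    cases h with
    | inl m'' => simp [consL, hm, hm', hmm', add_assoc]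
    | inr n => simp [consL, hm, hm', hmm']


lemma consR_add (n n' : ℕ) (l : List Letter) :
    consR (n + n') l = consR n (consR n' l) := by
  rcases eq_or_ne n 0 with rfl | hn
  · simp [consR]
  rcases eq_or_ne n' 0 with rfl | hn'
  · simp [consR]
  have hnn' : n + n' ≠ 0 := by omega
  cases l with
  | nil => simp [consR, hn, hn', hnn']
  | cons h t =>
    cases h with
    | inl m => simp [consR, hn, hn', hnn']
    | inr k => simp [consR, hn, hn', hnn', add_assoc]

/-- the action of the left factor on words -/
def endL : Multiplicative (ℕ × ℕ) →* Function.End (List Letter) where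
  toFun m := consL m.toAdd
  map_one' := by funext l; simp [consL, Function.End]; rfl
  map_mul' a b := by
    funext l
    exact consL_add a.toAdd b.toAdd l

def endR : Multiplicative ℕ →* Function.End (List Letter) where
  toFun n := consR n.toAdd
  map_one' := by funext l; simp [consR, Function.End]; rfl
  map_mul' a b := by
    funext l
    exact consR_add a.toAdd b.toAdd l

/-- normal form action of `ℕ² ∗ ℕ` on words -/
def nfE : HybridDeg →* Function.End (List Letter) := Monoid.Coprod.lift endL endR

/-- normal form of an element -/
def nf (x : HybridDeg) : List Letter := nfE x []

/-- the element of `ℕ² ∗ ℕ` corresponding to a letter -/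
def ldegD : Letter → HybridDeg
  | .inl m => Monoid.Coprod.inl (Multiplicative.ofAdd m)
  | .inr n => Monoid.Coprod.inr (Multiplicative.ofAdd n)

/-- the element of `ℕ² ∗ ℕ` corresponding to a word -/
def val (l : List Letter) : HybridDeg := (l.map ldegD).prod

@[simp] lemma val_nil : val [] = 1 := rfl

@[simp] lemma val_cons (a : Letter) (l : List Letter) :
    val (a :: l) = ldegD a * val l := by simp [val]

@[simp] lemma val_append (l l' : List Letter) : val (l ++ l') = val l * val l' := by
  simp [val]

lemma nfE_mul_apply (x y : HybridDeg) (l : List Letter) :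
    nfE (x * y) l = nfE x (nfE y l) := by
  rw [map_mul]; rfl

@[simp] lemma nfE_inl (m : ℕ × ℕ) (l : List Letter) :
    nfE (Monoid.Coprod.inl (Multiplicative.ofAdd m)) l = consL m l := by
  rw [nfE, Monoid.Coprod.lift_apply_inl]; rfl

@[simp] lemma nfE_inr (n : ℕ) (l : List Letter) :
    nfE (Monoid.Coprod.inr (Multiplicative.ofAdd n)) l = consR n l := by
  rw [nfE, Monoid.Coprod.lift_apply_inr]; rfl

lemma val_consL (m : ℕ × ℕ) (l : List Letter) :
    val (consL m l) = Monoid.Coprod.inl (Multiplicative.ofAdd m) * val l := by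
  rcases eq_or_ne m 0 with rfl | hm
  · simp [consL, ldegD]
  cases l with
  | nil => simp [consL, hm, ldegD]
  | cons h t =>
    cases h with
    | inl m' =>
      simp only [consL, hm, if_false, val_cons, ldegD]
      rw [show Multiplicative.ofAdd (m + m') =
        Multiplicative.ofAdd m * Multiplicative.ofAdd m' from rfl, map_mul, mul_assoc]
    | inr n => simp [consL, hm, ldegD]

lemma val_consR (n : ℕ) (l : List Letter) :
    val (consR n l) = Monoid.Coprod.inr (Multiplicative.ofAdd n) * val l := by
  rcases eq_or_ne n 0 with rfl | hn
  · simp [consR, ldegD]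
  cases l with
  | nil => simp [consR, hn, ldegD]
  | cons h t =>
    cases h with
    | inl m => simp [consR, hn, ldegD]
    | inr n' =>
      simp only [consR, hn, if_false, val_cons, ldegD]
      rw [show Multiplicative.ofAdd (n + n') =
        Multiplicative.ofAdd n * Multiplicative.ofAdd n' from rfl, map_mul, mul_assoc]

lemma val_nfE (x : HybridDeg) : ∀ l, val (nfE x l) = x * val l := by
  induction x using Monoid.Coprod.induction_on' with
  | one => intro l; rw [map_one, one_mul]; rfl
  | inl_mul m y ih =>
    intro l
    rw [nfE_mul_apply, show (Monoid.Coprod.inl m : HybridDeg)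
      = Monoid.Coprod.inl (Multiplicative.ofAdd m.toAdd) from rfl, nfE_inl,
      val_consL, ih, mul_assoc]
  | inr_mul n y ih =>
    intro l
    rw [nfE_mul_apply, show (Monoid.Coprod.inr n : HybridDeg)
      = Monoid.Coprod.inr (Multiplicative.ofAdd n.toAdd) from rfl, nfE_inr,
      val_consR, ih, mul_assoc]

@[simp] lemma val_nf (x : HybridDeg) : val (nf x) = x := by
  simpa [nf] using val_nfE x []


def consB : Letter → List Letter → List Letter
  | .inl m => consL m
  | .inr n => consR n

lemma val_consB (a : Letter) (l : List Letter) :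
    val (consB a l) = ldegD a * val l := by
  cases a with
  | inl m => exact val_consL m l
  | inr n => exact val_consR n l

/-- the shape of `consB a w` for a good letter `a` -/
lemma consB_good (a : Letter) (ha : Good a) (w : List Letter) :
    (w = [] ∧ consB a w = [a]) ∨
    (∃ h t, w = h :: t ∧ Alt a h ∧ consB a w = a :: w) ∨
    (∃ h t b, w = h :: t ∧ ¬ Alt a h ∧ consB a w = b :: t ∧ Good b ∧
      b.isLeft = a.isLeft ∧
      ((∃ m m', a = .inl m ∧ h = .inl m' ∧ b = .inl (m + m')) ∨
       (∃ n n', a = .inr n ∧ h = .inr n' ∧ b = .inr (n + n')))) := by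
  cases a with
  | inl m =>
    have ha' : m ≠ 0 := ha
    cases w with
    | nil => exact Or.inl ⟨rfl, by simp [consB, consL, ha']⟩
    | cons h t =>
      cases h with
      | inl m' =>
        refine Or.inr (Or.inr ⟨_, _, .inl (m + m'), rfl, by simp [Alt], ?_, ?_, rfl, ?_⟩)
        · simp [consB, consL, ha']
        · simp only [Good] at ha ⊢
          rcases m with ⟨x,y⟩; rcases m' with ⟨x',y'⟩
          simp only [Prod.mk_add_mk, Prod.ext_iff, ne_eq, not_and_or,
            Prod.fst_zero, Prod.snd_zero] at ha ⊢
          omega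
        · exact Or.inl ⟨m, m', rfl, rfl, rfl⟩
      | inr n =>
        exact Or.inr (Or.inl ⟨_, _, rfl, by simp [Alt], by simp [consB, consL, ha']⟩)
  | inr n =>
    have ha' : n ≠ 0 := ha
    cases w with
    | nil => exact Or.inl ⟨rfl, by simp [consB, consR, ha']⟩
    | cons h t =>
      cases h with
      | inr n' =>
        refine Or.inr (Or.inr ⟨_, _, .inr (n + n'), rfl, by simp [Alt], ?_, ?_, rfl, ?_⟩)
        · simp [consB, consR, ha']
        · simp only [Good] at ha ⊢; omega
        · exact Or.inr ⟨n, n', rfl, rfl, rfl⟩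
      | inl m =>
        exact Or.inr (Or.inl ⟨_, _, rfl, by simp [Alt], by simp [consB, consR, ha']⟩)

lemma consB_head_isLeft (a : Letter) (ha : Good a) (w : List Letter) :
    ∃ b t, consB a w = b :: t ∧ b.isLeft = a.isLeft ∧ Good b := by
  rcases consB_good a ha w with ⟨_, hc⟩ | ⟨h, t, _, _, hc⟩ | ⟨h, t, b, _, _, hc, hb, hl, _⟩
  · exact ⟨a, [], hc, rfl, ha⟩
  · exact ⟨a, _, hc, rfl, ha⟩
  · exact ⟨b, t, hc, hl, hb⟩

lemma red_consB (a : Letter) (ha : Good a) (w : List Letter) (hw : Red w) :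
    Red (consB a w) := by
  rcases consB_good a ha w with ⟨rfl, hc⟩ | ⟨h, t, rfl, halt, hc⟩ |
      ⟨h, t, b, rfl, hnalt, hc, hb, hl, _⟩
  · rw [hc]; exact ⟨by simpa using ha, List.isChain_singleton a⟩
  · rw [hc]
    refine ⟨?_, List.isChain_cons_cons.2 ⟨halt, hw.2⟩⟩
    intro x hx
    rcases List.mem_cons.1 hx with rfl | hx
    · exact ha
    · exact hw.1 x hx
  · rw [hc]
    refine ⟨?_, ?_⟩
    · intro x hx
      rcases List.mem_cons.1 hx with rfl | hx
      · exact hb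
      · exact hw.1 x (List.mem_cons_of_mem _ hx)
    · rcases hw with ⟨_, hch⟩
      rw [List.Chain', List.isChain_cons] at hch ⊢
      refine ⟨fun y hy => ?_, hch.2⟩
      have h1 : Alt h y := hch.1 y hy
      simp only [Alt, not_not, ne_eq] at hnalt h1 ⊢
      rw [hl, hnalt]; exact h1

lemma red_nil : Red [] := ⟨by simp, List.isChain_nil⟩

lemma red_consL (m : ℕ × ℕ) (w : List Letter) (hw : Red w) : Red (consL m w) := by
  rcases eq_or_ne m 0 with rfl | hm
  · simpa [consL] using hw
  · exact red_consB (.inl m) hm w hw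

lemma red_consR (n : ℕ) (w : List Letter) (hw : Red w) : Red (consR n w) := by
  rcases eq_or_ne n 0 with rfl | hn
  · simpa [consR] using hw
  · exact red_consB (.inr n) hn w hw

lemma red_nfE (x : HybridDeg) : ∀ w, Red w → Red (nfE x w) := by
  induction x using Monoid.Coprod.induction_on' with
  | one => intro w hw; rw [map_one]; exact hw
  | inl_mul m y ih =>
    intro w hw
    rw [nfE_mul_apply, show (Monoid.Coprod.inl m : HybridDeg)
      = Monoid.Coprod.inl (Multiplicative.ofAdd m.toAdd) from rfl, nfE_inl]
    exact red_consL _ _ (ih w hw)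
  | inr_mul n y ih =>
    intro w hw
    rw [nfE_mul_apply, show (Monoid.Coprod.inr n : HybridDeg)
      = Monoid.Coprod.inr (Multiplicative.ofAdd n.toAdd) from rfl, nfE_inr]
    exact red_consR _ _ (ih w hw)

lemma red_nf (x : HybridDeg) : Red (nf x) := red_nfE x [] red_nil


lemma red_cons_tail {x : Letter} {l : List Letter} (h : Red (x :: l)) : Red l :=
  ⟨fun a ha => h.1 a (List.mem_cons_of_mem _ ha), h.2.tail⟩

lemma consB_of_alt (a : Letter) (ha : Good a) (h : Letter) (t : List Letter)
    (halt : Alt a h) : consB a (h :: t) = a :: h :: t := by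
  rcases consB_good a ha (h :: t) with ⟨habs, _⟩ | ⟨h', t', heq, _, hc⟩ |
      ⟨h', t', b, heq, hnalt, _, _, _, _⟩
  · exact absurd habs (by simp)
  · exact hc
  · injection heq with e1 e2
    subst e1
    exact absurd halt hnalt

lemma nfE_ldegD (a : Letter) (w : List Letter) : nfE (ldegD a) w = consB a w := by
  cases a with
  | inl m => exact nfE_inl m w
  | inr n => exact nfE_inr n w

lemma nfE_val_red (init : List Letter) : ∀ (a : Letter), Red (init ++ [a]) →
    ∀ w, nfE (val (init ++ [a])) w = init ++ consB a w := by
  induction init with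
  | nil =>
    intro a _ w
    rw [show val ([] ++ [a]) = ldegD a by simp, nfE_ldegD]
    rfl
  | cons x init ih =>
    intro a hred w
    have hred' : Red (init ++ [a]) := red_cons_tail hred
    have hx : Good x := hred.1 x (by simp)
    rw [show ((x :: init) ++ [a] : List Letter) = x :: (init ++ [a]) from rfl, val_cons,
      nfE_mul_apply, ih a hred' w, nfE_ldegD]
    have halt : ∃ b t, init ++ consB a w = b :: t ∧ Alt x b := by
      cases init with
      | nil =>
        have hga : Good a := hred.1 a (by simp)
        obtain ⟨b, t, hbt, hbl, _⟩ := consB_head_isLeft a hga w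
        have hxa : Alt x a := (List.isChain_cons_cons.mp hred.2).1
        exact ⟨b, t, by simpa using hbt, by simpa [Alt, hbl] using hxa⟩
      | cons y init2 =>
        have hxy : Alt x y := (List.isChain_cons_cons.mp hred.2).1
        exact ⟨y, init2 ++ consB a w, rfl, hxy⟩
    obtain ⟨b, t, hbt, hxb⟩ := halt
    rw [hbt, consB_of_alt x hx b t hxb, ← hbt]
    rfl

lemma consB_nil (a : Letter) (ha : Good a) : consB a [] = [a] := by
  rcases consB_good a ha [] with ⟨_, hc⟩ | ⟨h, t, habs, _⟩ | ⟨h, t, b, habs, _⟩ <;>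
    first
    | exact hc
    | exact absurd habs (by simp)

lemma nf_val_red (l : List Letter) (hl : Red l) : nf (val l) = l := by
  rcases List.eq_nil_or_concat l with rfl | ⟨init, a, rfl⟩
  · rw [val_nil, nf, map_one]; rfl
  · simp only [List.concat_eq_append] at hl ⊢
    have hg : Good a := hl.1 a (by simp)
    rw [nf, nfE_val_red init a hl [], consB_nil a hg]

lemma red_val_inj {l l' : List Letter} (hl : Red l) (hl' : Red l')
    (h : val l = val l') : l = l' := by
  rw [← nf_val_red l hl, ← nf_val_red l' hl', h]

/-- extension order on letters -/
def LLe : Letter → Letter → Prop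
  | .inl m, .inl m' => m ≤ m'
  | .inr n, .inr n' => n ≤ n'
  | _, _ => False

lemma LLe_refl (a : Letter) : LLe a a := by cases a <;> simp [LLe]

lemma LLe_isLeft {a b : Letter} (h : LLe a b) : a.isLeft = b.isLeft := by
  cases a <;> cases b <;> simp [LLe] at h ⊢

lemma LLe_antisymm {a b : Letter} (h1 : LLe a b) (h2 : LLe b a) : a = b := by
  cases a with
  | inl m =>
    cases b with
    | inl m' => exact congrArg Sum.inl (le_antisymm h1 h2)
    | inr n => exact h1.elim
  | inr n =>
    cases b with
    | inl m => exact h1.elim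
    | inr n' => exact congrArg Sum.inr (le_antisymm h1 h2)

lemma ldegD_dvd_of_LLe {a a' : Letter} (h : LLe a a') : ldegD a ∣ ldegD a' := by
  cases a with
  | inl m =>
    cases a' with
    | inl m' =>
      have hle : m ≤ m' := h
      refine ⟨ldegD (.inl (m' - m)), ?_⟩
      rw [ldegD, ldegD, ldegD, ← map_mul]
      congr 1
      rw [← ofAdd_add]
      congr 1
      rcases m with ⟨x, y⟩; rcases m' with ⟨x', y'⟩
      rcases hle with ⟨h1, h2⟩
      simp only [Prod.mk_sub_mk, Prod.mk_add_mk, Prod.ext_iff] at *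
      omega
    | inr n => exact absurd h (by simp [LLe])
  | inr n =>
    cases a' with
    | inl m => exact absurd h (by simp [LLe])
    | inr n' =>
      have hle : n ≤ n' := h
      refine ⟨ldegD (.inr (n' - n)), ?_⟩
      rw [ldegD, ldegD, ldegD, ← map_mul]
      congr 1
      rw [← ofAdd_add]
      congr 1
      omega

lemma dvd_val_of_prefix (pre : List Letter) {a a' : Letter} (rest : List Letter)
    (h : LLe a a') : val (pre ++ [a]) ∣ val (pre ++ a' :: rest) := by
  obtain ⟨c, hc⟩ := ldegD_dvd_of_LLe h
  refine ⟨c * val rest, ?_⟩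
  simp [val_append, hc, mul_assoc]

lemma dvd_char_fwd {p q : List Letter} (hp : Red p) (hq : Red q)
    {init : List Letter} {a : Letter} (hpa : p = init ++ [a]) (h : val p ∣ val q) :
    ∃ a' rest, q = init ++ a' :: rest ∧ LLe a a' := by
  obtain ⟨r, hr⟩ := h
  have hq2 : q = nfE (val p) (nf r) := by
    conv_lhs => rw [← nf_val_red q hq]
    rw [hr, nf, nfE_mul_apply]; rfl
  subst hpa
  rw [nfE_val_red init a hp (nf r)] at hq2
  have hg : Good a := hp.1 a (by simp)
  rcases consB_good a hg (nf r) with ⟨_, hc⟩ | ⟨h', t', _, _, hc⟩ |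
      ⟨h', t', b, heq, _, hc, _, _, hsum⟩
  · exact ⟨a, [], by rw [hq2, hc], LLe_refl a⟩
  · exact ⟨a, nf r, by rw [hq2, hc], LLe_refl a⟩
  · refine ⟨b, t', by rw [hq2, hc], ?_⟩
    rcases hsum with ⟨m, m', rfl, _, rfl⟩ | ⟨n, n', rfl, _, rfl⟩
    · exact (le_self_add : m ≤ m + m')
    · exact (Nat.le_add_right n n' : n ≤ n + n')

lemma concat_inj {α : Type*} {l1 l2 : List α} {x y : α}
    (h : l1 ++ [x] = l2 ++ [y]) : l1 = l2 ∧ x = y := by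
  have hlen : l1.length = l2.length := by
    have := congrArg List.length h
    simpa using this
  obtain ⟨h1, h2⟩ := List.append_inj h hlen
  exact ⟨h1, by simpa using h2⟩

lemma red_val_dvd_antisymm {p q : List Letter} (hp : Red p) (hq : Red q)
    (hpne : p ≠ []) (hqne : q ≠ [])
    (h1 : val p ∣ val q) (h2 : val q ∣ val p) : p = q := by
  rcases List.eq_nil_or_concat p with rfl | ⟨initp, a, rfl⟩
  · exact absurd rfl hpne
  rcases List.eq_nil_or_concat q with rfl | ⟨initq, b, rfl⟩
  · exact absurd rfl hqne
  simp only [List.concat_eq_append] at hp hq h1 h2 ⊢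
  obtain ⟨a', rest, hq1, hlea⟩ := dvd_char_fwd hp hq rfl h1
  obtain ⟨b', rest2, hp1, hleb⟩ := dvd_char_fwd hq hp rfl h2
  have hl1 := congrArg List.length hq1
  have hl2 := congrArg List.length hp1
  simp only [List.length_append, List.length_singleton, List.length_cons, List.length_nil] at hl1 hl2
  have hrest : rest = [] := List.length_eq_zero_iff.mp (by omega)
  have hrest2 : rest2 = [] := List.length_eq_zero_iff.mp (by omega)
  subst hrest; subst hrest2
  obtain ⟨rfl, rfl⟩ := concat_inj hq1
  obtain ⟨_, rfl⟩ := concat_inj hp1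
  rw [LLe_antisymm hlea hleb]


/-- supremum of same-type letters -/
def lsup : Letter → Letter → Letter
  | .inl m, .inl m' => .inl (m ⊔ m')
  | .inr n, .inr n' => .inr (max n n')
  | a, _ => a

lemma LLe_lsup_left {a b : Letter} (h : a.isLeft = b.isLeft) : LLe a (lsup a b) := by
  cases a with
  | inl m =>
    cases b with
    | inl m' => exact (le_sup_left : m ≤ m ⊔ m')
    | inr n => simp [Sum.isLeft] at h
  | inr n =>
    cases b with
    | inl m => simp [Sum.isLeft] at h
    | inr n' => exact (Nat.le_max_left n n')

lemma LLe_lsup_right {a b : Letter} (h : a.isLeft = b.isLeft) : LLe b (lsup a b) := by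
  cases a with
  | inl m =>
    cases b with
    | inl m' => exact (le_sup_right : m' ≤ m ⊔ m')
    | inr n => simp [Sum.isLeft] at h
  | inr n =>
    cases b with
    | inl m => simp [Sum.isLeft] at h
    | inr n' => exact (Nat.le_max_right n n')

lemma lsup_LLe {a b c : Letter} (h1 : LLe a c) (h2 : LLe b c) : LLe (lsup a b) c := by
  cases a with
  | inl m =>
    cases c with
    | inr n => exact h1.elim
    | inl mc =>
      cases b with
      | inr n => exact h2.elim
      | inl m' => exact (sup_le h1 h2 : m ⊔ m' ≤ mc)
  | inr n =>
    cases c with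
    | inl m => exact h1.elim
    | inr nc =>
      cases b with
      | inl m => exact h2.elim
      | inr n' => exact (Nat.max_le.mpr ⟨h1, h2⟩ : max n n' ≤ nc)

lemma good_of_LLe {a b : Letter} (ha : Good a) (h : LLe a b) : Good b := by
  cases a with
  | inl m =>
    cases b with
    | inl m' =>
      have hle : m ≤ m' := h
      have ham : m ≠ 0 := ha
      intro h0
      apply ham
      have : m' = 0 := h0
      rcases m with ⟨x, y⟩; rcases m' with ⟨x', y'⟩
      rcases hle with ⟨e1, e2⟩
      simp only [Prod.ext_iff, Prod.fst_zero, Prod.snd_zero] at this ⊢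
      omega
    | inr n => exact h.elim
  | inr n =>
    cases b with
    | inl m => exact h.elim
    | inr n' =>
      have hle : n ≤ n' := h
      have han : n ≠ 0 := ha
      exact fun h0 => han (by omega)

lemma lsup_isLeft {a b : Letter} (h : a.isLeft = b.isLeft) :
    (lsup a b).isLeft = a.isLeft := by
  cases a <;> cases b <;> simp [Sum.isLeft, lsup] at h ⊢

lemma red_concat_congr {P : List Letter} {a s : Letter} (h : Red (P ++ [a]))
    (hs : Good s) (hl : s.isLeft = a.isLeft) : Red (P ++ [s]) := by
  constructor
  · intro x hx
    rcases List.mem_append.1 hx with hx | hx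
    · exact h.1 x (List.mem_append_left _ hx)
    · rw [List.mem_singleton.1 hx]; exact hs
  · have h2 := List.isChain_append.mp h.2
    refine List.isChain_append.mpr ⟨h2.1, List.isChain_singleton s, ?_⟩
    intro x hx y hy
    have := h2.2.2 x hx a (by simp)
    simp only [List.head?_cons, Option.mem_def, Option.some.injEq] at hy
    subst hy
    simp only [Alt, ne_eq, hl] at *
    exact this

end Stmt18Aux


section HLevel

open Stmt18Aux


namespace HybridBlocks

variable (H : HybridBlocks)

/-- the letter of a block -/
def bletter : H.Block → Letter := Sum.map H.Edeg H.Ddeg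

lemma bdeg_eq (b : H.Block) : H.bdeg b = ldegD (H.bletter b) := by
  cases b <;> rfl

lemma pdeg_eq (l : List H.Block) : H.pdeg l = val (l.map H.bletter) := by
  rw [pdeg, val, List.map_map]
  congr 1
  exact List.map_congr_left fun b _ => H.bdeg_eq b

lemma good_bletter (b : H.Block) : Good (H.bletter b) := by
  cases b with
  | inl e => exact H.Edeg_ne e
  | inr d => exact Nat.pos_iff_ne_zero.mp (H.Ddeg_pos d)

lemma alt_of_difftype {a b : H.Block} (h : H.DiffType a b) :
    Alt (H.bletter a) (H.bletter b) := by
  cases a <;> cases b <;> first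
    | exact h.elim
    | simp [bletter, Alt, Sum.isLeft]

lemma red_of_isPath {l : List H.Block} (h : H.IsPath l) : Red (l.map H.bletter) := by
  constructor
  · intro x hx
    obtain ⟨b, _, rfl⟩ := List.mem_map.1 hx
    exact H.good_bletter b
  · rw [List.Chain', List.isChain_map]
    exact List.IsChain.imp (fun a b hab => H.alt_of_difftype hab.2) h.2

lemma map_bletter_ne_nil {l : List H.Block} (h : H.IsPath l) :
    l.map H.bletter ≠ [] := by
  simpa using h.1

lemma BLe_refl (b : H.Block) : H.BLe b b := by
  cases b <;> exact Or.inl rfl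

lemma LLe_of_BLe {b b' : H.Block} (h : H.BLe b b') :
    LLe (H.bletter b) (H.bletter b') := by
  cases b with
  | inl e =>
    cases b' with
    | inl e' =>
      rcases h with rfl | ⟨t, ht, rfl⟩
      · exact LLe_refl _
      · show H.Edeg e ≤ H.Edeg (H.Ecomp e t)
        rw [H.Edeg_comp e t ht]
        exact le_self_add
    | inr d => exact h.elim
  | inr d =>
    cases b' with
    | inl e => exact h.elim
    | inr d' =>
      rcases h with rfl | ⟨t, ht, rfl⟩
      · exact LLe_refl _
      · show H.Ddeg d ≤ H.Ddeg (H.Dcomp d t)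
        rw [H.Ddeg_comp d t ht]
        exact Nat.le_add_right _ _

lemma btgt_of_BLe {b b' : H.Block} (h : H.BLe b b') : H.btgt b' = H.btgt b := by
  cases b with
  | inl e =>
    cases b' with
    | inl e' =>
      rcases h with rfl | ⟨t, ht, rfl⟩
      · rfl
      · exact H.Etgt_comp e t ht
    | inr d => exact h.elim
  | inr d =>
    cases b' with
    | inl e => exact h.elim
    | inr d' =>
      rcases h with rfl | ⟨t, ht, rfl⟩
      · rfl
      · exact H.Dtgt_comp d t ht

lemma eq_of_BLe_of_bletter_eq {b b' : H.Block} (h : H.BLe b b')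
    (hd : H.bletter b = H.bletter b') : b = b' := by
  cases b with
  | inl e =>
    cases b' with
    | inl e' =>
      rcases h with rfl | ⟨t, ht, rfl⟩
      · rfl
      · exfalso
        have h1 : H.Edeg e = H.Edeg e + H.Edeg t := by
          rw [← H.Edeg_comp e t ht]
          exact Sum.inl.inj hd
        exact H.Edeg_ne t (left_eq_add.mp h1)
    | inr d => exact h.elim
  | inr d =>
    cases b' with
    | inl e => exact h.elim
    | inr d' =>
      rcases h with rfl | ⟨t, ht, rfl⟩
      · rfl
      · exfalso
        have : H.Ddeg d = H.Ddeg (H.Dcomp d t) := Sum.inr.inj hd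
        rw [H.Ddeg_comp d t ht] at this
        have := H.Ddeg_pos t
        omega

lemma difftype_congr {x b c : H.Block} (h : H.DiffType x b)
    (hl : (H.bletter c).isLeft = (H.bletter b).isLeft) : H.DiffType x c := by
  cases b <;> cases c <;> cases x <;>
    first
    | exact h.elim
    | trivial
    | simp [bletter, Sum.isLeft] at hl

lemma PLe_refl {l : List H.Block} (h : l ≠ []) : H.PLe l l := by
  rcases List.eq_nil_or_concat l with rfl | ⟨init, b, rfl⟩
  · exact absurd rfl h
  · exact ⟨init, b, b, [], by simp, by simp, H.BLe_refl b⟩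

lemma isPath_concat_congr {pre : List H.Block} {b c : H.Block}
    (h : H.IsPath (pre ++ [b])) (hbc : H.BLe b c) : H.IsPath (pre ++ [c]) := by
  have hiso : (H.bletter c).isLeft = (H.bletter b).isLeft :=
    (LLe_isLeft (H.LLe_of_BLe hbc)).symm
  refine ⟨by simp, ?_⟩
  have h2 := List.isChain_append.mp h.2
  refine List.isChain_append.mpr ⟨h2.1, List.isChain_singleton c, ?_⟩
  intro x hx y hy
  simp only [List.head?_cons, Option.mem_def, Option.some.injEq] at hy
  subst hy
  obtain ⟨h3, h4⟩ := h2.2.2 x hx b (by simp)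
  exact ⟨(H.btgt_of_BLe hbc).symm ▸ h3, H.difftype_congr h4 hiso⟩


lemma pdeg_dvd_of_prefix {pre : List H.Block} {b b' : H.Block} (rest : List H.Block)
    (h : H.BLe b b') : H.pdeg (pre ++ [b]) ∣ H.pdeg (pre ++ b' :: rest) := by
  rw [H.pdeg_eq, H.pdeg_eq, List.map_append, List.map_append]
  exact dvd_val_of_prefix _ (rest.map H.bletter) (H.LLe_of_BLe h)

lemma hmce_case1 {mu nu : List H.Block} {pre : List H.Block} {b b' : H.Block}
    {rest : List H.Block} (hnu : H.IsPath nu)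
    (h1 : mu = pre ++ [b]) (h2 : nu = pre ++ b' :: rest) (hb : H.BLe b b') :
    H.HMCE mu nu = {nu} := by
  have hdvd : H.pdeg mu ∣ H.pdeg nu := by
    rw [h1, h2]; exact H.pdeg_dvd_of_prefix rest hb
  ext lam
  simp only [Set.mem_singleton_iff]
  constructor
  · rintro ⟨hpath, _, hpn, hlub⟩
    have h3 : H.pdeg nu ∣ H.pdeg lam := hlub.2.1
    have h4 : H.pdeg lam ∣ H.pdeg nu := hlub.2.2 _ hdvd dvd_rfl
    have hmapeq : lam.map H.bletter = nu.map H.bletter := by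
      refine red_val_dvd_antisymm (H.red_of_isPath hpath) (H.red_of_isPath hnu)
        (H.map_bletter_ne_nil hpath) (H.map_bletter_ne_nil hnu) ?_ ?_
      · rw [← H.pdeg_eq, ← H.pdeg_eq]; exact h4
      · rw [← H.pdeg_eq, ← H.pdeg_eq]; exact h3
    obtain ⟨pre2, c, c', rest2, hnu2, hlam2, hble⟩ := hpn
    have hlen : lam.length = nu.length := by
      have := congrArg List.length hmapeq
      simpa using this
    have hr2 : rest2 = [] := by
      have : lam.length = pre2.length + 1 + rest2.length := by rw [hlam2]; simp; omega
      have : nu.length = pre2.length + 1 := by rw [hnu2]; simp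
      apply List.length_eq_zero_iff.mp
      omega
    subst hr2
    have hcc : H.bletter c' = H.bletter c := by
      have : (pre2 ++ [c']).map H.bletter = (pre2 ++ [c]).map H.bletter := by
        rw [← hlam2, ← hnu2, hmapeq]
      rw [List.map_append, List.map_append] at this
      exact (concat_inj this).2
    rw [hlam2, hnu2, H.eq_of_BLe_of_bletter_eq hble hcc.symm]
  · rintro rfl
    refine ⟨hnu, ⟨pre, b, b', rest, h1, h2, hb⟩, H.PLe_refl hnu.1, hdvd, dvd_rfl,
      fun t _ ht => ht⟩


lemma red_concat {pre : List H.Block} {b : H.Block} (h : H.IsPath (pre ++ [b])) :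
    Red (pre.map H.bletter ++ [H.bletter b]) := by
  have := H.red_of_isPath h
  rwa [List.map_append, List.map_cons, List.map_nil] at this

lemma pdeg_concat (pre : List H.Block) (b : H.Block) :
    H.pdeg (pre ++ [b]) = val (pre.map H.bletter ++ [H.bletter b]) := by
  rw [H.pdeg_eq, List.map_append, List.map_cons, List.map_nil]

lemma hmce_case2_mem {mu nu pre : List H.Block} {b b' : H.Block}
    (hmu : H.IsPath mu) (hnu : H.IsPath nu)
    (h1 : mu = pre ++ [b]) (h2 : nu = pre ++ [b']) {c : H.Block}
    (hble2 : H.BLe b c) (hble3 : H.BLe b' c)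
    (hS : H.bletter c = lsup (H.bletter b) (H.bletter b')) :
    pre ++ [c] ∈ H.HMCE mu nu := by
  have hredmu : Red (pre.map H.bletter ++ [H.bletter b]) := H.red_concat (h1 ▸ hmu)
  refine ⟨H.isPath_concat_congr (h1 ▸ hmu) hble2,
    ⟨pre, b, c, [], h1, rfl, hble2⟩, ⟨pre, b', c, [], h2, rfl, hble3⟩,
    by rw [h1]; exact H.pdeg_dvd_of_prefix [] hble2,
    by rw [h2]; exact H.pdeg_dvd_of_prefix [] hble3, ?_⟩
  intro t ht1 ht2
  have hw : Red (nf t) := red_nf t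
  have ht : t = val (nf t) := (val_nf t).symm
  have ht1' : val (pre.map H.bletter ++ [H.bletter b]) ∣ val (nf t) := by
    rw [← H.pdeg_concat, ← ht, ← h1]; exact ht1
  have ht2' : val (pre.map H.bletter ++ [H.bletter b']) ∣ val (nf t) := by
    rw [← H.pdeg_concat, ← ht, ← h2]; exact ht2
  obtain ⟨x, r, hwx, hlex⟩ := dvd_char_fwd hredmu hw rfl ht1'
  obtain ⟨x', r', hwx', hlex'⟩ := dvd_char_fwd (H.red_concat (h2 ▸ hnu)) hw rfl ht2'
  have hxx : x = x' ∧ r = r' := by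
    have := hwx ▸ hwx'
    have h3 : x :: r = x' :: r' := List.append_cancel_left (hwx ▸ hwx' : _)
    exact ⟨(List.cons.injEq .. ▸ h3 : _ ∧ _).1, (List.cons.injEq .. ▸ h3 : _ ∧ _).2⟩
  obtain ⟨rfl, rfl⟩ := hxx
  rw [H.pdeg_concat, ht, hwx, hS]
  exact dvd_val_of_prefix _ r (lsup_LLe hlex hlex')

lemma hmce_case2 {mu nu pre : List H.Block} {b b' : H.Block}
    (hmu : H.IsPath mu) (hnu : H.IsPath nu)
    (h1 : mu = pre ++ [b]) (h2 : nu = pre ++ [b']) :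
    H.HMCE mu nu = {l | ∃ c ∈ H.BMCE b b', l = pre ++ [c]} := by
  have hredmu : Red (pre.map H.bletter ++ [H.bletter b]) := H.red_concat (h1 ▸ hmu)
  have hrednu : Red (pre.map H.bletter ++ [H.bletter b']) := H.red_concat (h2 ▸ hnu)
  ext lam
  simp only [Set.mem_setOf_eq]
  constructor
  · rintro ⟨hpath, hpm, hpn, hlub⟩
    obtain ⟨pre2, bb, b2, rest2, hmu2, hlam2, hble2⟩ := hpm
    obtain ⟨h5, h6⟩ := concat_inj (show pre ++ [b] = pre2 ++ [bb] by rw [← h1, ← hmu2])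
    subst h5; subst h6
    obtain ⟨pre3, cc, b3, rest3, hnu3, hlam3, hble3⟩ := hpn
    obtain ⟨h5, h6⟩ := concat_inj (show pre ++ [b'] = pre3 ++ [cc] by rw [← h2, ← hnu3])
    subst h5; subst h6
    have h7 : b2 :: rest2 = b3 :: rest3 :=
      List.append_cancel_left (show pre ++ b2 :: rest2 = pre ++ b3 :: rest3 by
        rw [← hlam2, ← hlam3])
    have h8 : b2 = b3 := (List.cons.injEq .. ▸ h7 : _ ∧ _).1
    have h9 : rest2 = rest3 := (List.cons.injEq .. ▸ h7 : _ ∧ _).2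
    subst h8; subst h9
    have hA2 : LLe (H.bletter b) (H.bletter b2) := H.LLe_of_BLe hble2
    have hA'2 : LLe (H.bletter b') (H.bletter b2) := H.LLe_of_BLe hble3
    have hAA' : (H.bletter b).isLeft = (H.bletter b').isLeft :=
      (LLe_isLeft hA2).trans (LLe_isLeft hA'2).symm
    have hgoodS : Good (lsup (H.bletter b) (H.bletter b')) :=
      good_of_LLe (H.good_bletter b) (LLe_lsup_left hAA')
    have hredS : Red (pre.map H.bletter ++ [lsup (H.bletter b) (H.bletter b')]) :=
      red_concat_congr hredmu hgoodS (lsup_isLeft hAA')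
    have hmut : H.pdeg mu ∣ val (pre.map H.bletter ++ [lsup (H.bletter b) (H.bletter b')]) := by
      rw [h1, H.pdeg_concat]
      exact dvd_val_of_prefix _ [] (LLe_lsup_left hAA')
    have hnut : H.pdeg nu ∣ val (pre.map H.bletter ++ [lsup (H.bletter b) (H.bletter b')]) := by
      rw [h2, H.pdeg_concat]
      exact dvd_val_of_prefix _ [] (LLe_lsup_right hAA')
    have hlamt := hlub.2.2 _ hmut hnut
    rcases List.eq_nil_or_concat lam with rfl | ⟨initl, lb, hlameq⟩
    · exact absurd rfl hpath.1
    simp only [List.concat_eq_append] at hlameq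
    have hlamt' : val (initl.map H.bletter ++ [H.bletter lb]) ∣
        val (pre.map H.bletter ++ [lsup (H.bletter b) (H.bletter b')]) := by
      rw [← H.pdeg_concat, ← hlameq]; exact hlamt
    obtain ⟨x, r3, hPS, hlex⟩ :=
      dvd_char_fwd (H.red_concat (hlameq ▸ hpath)) hredS rfl hlamt'
    have hlen1 := congrArg List.length hPS
    have hlen2 := congrArg List.length hlameq
    rw [hlam2] at hlen2
    simp only [List.length_append, List.length_cons, List.length_nil, List.length_map,
      List.length_singleton] at hlen1 hlen2
    have hrest2 : rest2 = [] := List.length_eq_zero_iff.mp (by omega)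
    subst hrest2
    obtain ⟨h10, h11⟩ := concat_inj (show initl ++ [lb] = pre ++ [b2] by
      rw [← hlameq, hlam2])
    subst h10; subst h11
    have h12 : [lsup (H.bletter b) (H.bletter b')] = x :: r3 :=
      List.append_cancel_left hPS
    have h13 : x = lsup (H.bletter b) (H.bletter b') :=
      ((List.cons.injEq .. ▸ h12.symm : _ ∧ _).1)
    have hSeq : H.bletter lb = lsup (H.bletter b) (H.bletter b') := by
      refine LLe_antisymm ?_ (lsup_LLe hA2 hA'2)
      rw [← h13]; exact hlex
    refine ⟨lb, ?_, hlam2⟩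
    cases lb with
    | inl f =>
      cases b with
      | inr d => exact False.elim hble2
      | inl e =>
        cases b' with
        | inr d => exact False.elim hble3
        | inl e' =>
          have hdeg : H.Edeg f = H.Edeg e ⊔ H.Edeg e' := Sum.inl.inj hSeq
          exact ⟨f, ⟨hble2, hble3, hdeg⟩, rfl⟩
    | inr f =>
      cases b with
      | inl e => exact False.elim hble2
      | inr d =>
        cases b' with
        | inl e => exact False.elim hble3
        | inr d' =>
          have hdeg : H.Ddeg f = max (H.Ddeg d) (H.Ddeg d') := Sum.inr.inj hSeq
          exact ⟨f, ⟨hble2, hble3, hdeg⟩, rfl⟩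
  · rintro ⟨c, hc, rfl⟩
    cases b with
    | inl e =>
      cases b' with
      | inr d => exact absurd hc (by simp [BMCE])
      | inl e' =>
        obtain ⟨f, ⟨hb1, hb2, hdeg⟩, rfl⟩ := hc
        refine H.hmce_case2_mem hmu hnu h1 h2 hb1 hb2 ?_
        show Sum.inl (H.Edeg f) = lsup (Sum.inl (H.Edeg e)) (Sum.inl (H.Edeg e'))
        rw [hdeg]; rfl
    | inr d =>
      cases b' with
      | inl e => exact absurd hc (by simp [BMCE])
      | inr d' =>
        obtain ⟨f, ⟨hb1, hb2, hdeg⟩, rfl⟩ := hc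
        refine H.hmce_case2_mem hmu hnu h1 h2 hb1 hb2 ?_
        show Sum.inr (H.Ddeg f) = lsup (Sum.inr (H.Ddeg d)) (Sum.inr (H.Ddeg d'))
        rw [hdeg]; rfl


lemma hmce_case3 {mu nu : List H.Block} (hle : mu.length ≤ nu.length)
    (hnot : ¬ ∃ (pre : List H.Block) (b b' : H.Block) (rest : List H.Block),
        mu = pre ++ [b] ∧ nu = pre ++ b' :: rest ∧ (rest = [] ∨ H.BLe b b')) :
    H.HMCE mu nu = ∅ := by
  rw [Set.eq_empty_iff_forall_notMem]
  rintro lam ⟨hpath, hpm, hpn, _⟩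
  apply hnot
  obtain ⟨pre, b, b2, rest2, hmu1, hlam1, hble1⟩ := hpm
  obtain ⟨pre', c, b3, rest3, hnu1, hlam2, hble2⟩ := hpn
  have hlen : pre.length ≤ pre'.length := by
    have l1 := congrArg List.length hmu1
    have l2 := congrArg List.length hnu1
    simp only [List.length_append, List.length_singleton] at l1 l2
    omega
  have heq : pre ++ b2 :: rest2 = pre' ++ b3 :: rest3 := by rw [← hlam1, ← hlam2]
  rcases List.append_eq_append_iff.mp heq with ⟨mid, hpre', hrest⟩ | ⟨mid, hpre, hrest⟩
  · cases mid with
    | nil =>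
      refine ⟨pre, b, c, [], hmu1, ?_, Or.inl rfl⟩
      rw [hnu1, hpre']
      simp
    | cons d mid' =>
      have hd : b2 = d ∧ rest2 = mid' ++ b3 :: rest3 := by
        rw [List.cons_append] at hrest
        exact ⟨(List.cons.injEq .. ▸ hrest : _ ∧ _).1, (List.cons.injEq .. ▸ hrest : _ ∧ _).2⟩
      refine ⟨pre, b, b2, mid' ++ [c], hmu1, ?_, Or.inr hble1⟩
      rw [hnu1, hpre', ← hd.1]
      simp
  · have hmid : mid = [] := by
      have := congrArg List.length hpre
      simp only [List.length_append] at this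
      exact List.length_eq_zero_iff.mp (by omega)
    subst hmid
    refine ⟨pre, b, c, [], hmu1, ?_, Or.inl rfl⟩
    rw [hnu1, hpre]
    simp

lemma hmce_comm (mu nu : List H.Block) : H.HMCE mu nu = H.HMCE nu mu := by
  ext lam
  constructor <;> rintro ⟨a, b, c, d1, d2, d3⟩ <;>
    exact ⟨a, c, b, d2, d1, fun t h1 h2 => d3 t h2 h1⟩

lemma bmce_finite (b b' : H.Block) : (H.BMCE b b').Finite := by
  cases b with
  | inl e =>
    cases b' with
    | inl e' =>
      refine Set.Finite.image _ (Set.Finite.subset (H.EFA e e') ?_)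
      intro c hc
      exact ⟨hc.1, hc.2.1, hc.2.2⟩
    | inr d => simp only [BMCE]; exact Set.finite_empty
  | inr d =>
    cases b' with
    | inl e => simp only [BMCE]; exact Set.finite_empty
    | inr d' =>
      refine Set.Finite.image _ (Set.Finite.subset (H.DFA d d') ?_)
      intro c hc
      exact ⟨hc.1, hc.2.1, hc.2.2⟩

lemma hmce_finite_le {mu nu : List H.Block} (hmu : H.IsPath mu) (hnu : H.IsPath nu)
    (hle : mu.length ≤ nu.length) : (H.HMCE mu nu).Finite := by
  by_cases hex : ∃ (pre : List H.Block) (b b' : H.Block) (rest : List H.Block),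
      mu = pre ++ [b] ∧ nu = pre ++ b' :: rest ∧ (rest = [] ∨ H.BLe b b')
  · obtain ⟨pre, b, b', rest, h1, h2, hor⟩ := hex
    rcases eq_or_ne rest [] with rfl | hrest
    · rw [H.hmce_case2 hmu hnu h1 h2]
      have himg : {l | ∃ c ∈ H.BMCE b b', l = pre ++ [c]} =
          (fun c => pre ++ [c]) '' H.BMCE b b' := by
        ext l
        constructor
        · rintro ⟨c, hc, rfl⟩; exact ⟨c, hc, rfl⟩
        · rintro ⟨c, hc, rfl⟩; exact ⟨c, hc, rfl⟩
      rw [himg]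
      exact (H.bmce_finite b b').image _
    · rcases hor with rfl | hble
      · exact absurd rfl hrest
      · rw [H.hmce_case1 hnu h1 h2 hble]
        exact Set.finite_singleton nu
  · rw [H.hmce_case3 hle hex]
    exact Set.finite_empty

end HybridBlocks

end HLevel

/-- In the hybrid graph `Λ` over `ℕ² ∗ ℕ`, for finite paths
`μ = μ₁⋯μ_m` and `ν = ν₁⋯ν_n` with `m ≤ n`:
`MCE(μ,ν) = {ν}` if `n > m`, `μ_i = ν_i` for `i < m` and `ν_m = μ_m ν_m'`;
`MCE(μ,ν) = (μ₁⋯μ_{m-1})·MCE(μ_m,ν_m)` if `n = m` and `μ_i = ν_i` for `i < m`; and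
`MCE(μ,ν) = ∅` otherwise.  In particular, `Λ` is finitely aligned. -/
theorem stmt18 (H : HybridBlocks) :
    (∀ mu nu : List H.Block, H.IsPath mu → H.IsPath nu → mu.length ≤ nu.length →
      (∀ (pre : List H.Block) (b b' : H.Block) (rest : List H.Block),
        mu = pre ++ [b] → nu = pre ++ b' :: rest → rest ≠ [] → H.BLe b b' →
        H.HMCE mu nu = {nu}) ∧
      (∀ (pre : List H.Block) (b b' : H.Block),
        mu = pre ++ [b] → nu = pre ++ [b'] →
        H.HMCE mu nu = {l | ∃ c ∈ H.BMCE b b', l = pre ++ [c]}) ∧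
      ((¬ ∃ (pre : List H.Block) (b b' : H.Block) (rest : List H.Block),
          mu = pre ++ [b] ∧ nu = pre ++ b' :: rest ∧ (rest = [] ∨ H.BLe b b')) →
        H.HMCE mu nu = ∅)) ∧
    ∀ mu nu : List H.Block, H.IsPath mu → H.IsPath nu → (H.HMCE mu nu).Finite := by
  constructor
  · intro mu nu hmu hnu hlen
    refine ⟨?_, ?_, ?_⟩
    · intro pre b b' rest h1 h2 _ hb
      exact H.hmce_case1 hnu h1 h2 hb
    · intro pre b b' h1 h2
      exact H.hmce_case2 hmu hnu h1 h2
    · intro hnot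
      exact H.hmce_case3 hlen hnot
  · intro mu nu hmu hnu
    rcases le_total mu.length nu.length with hle | hle
    · exact H.hmce_finite_le hmu hnu hle
    · rw [H.hmce_comm]
      exact H.hmce_finite_le hnu hmu hle
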